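/- (Claim 2 in the proof of the main theorem.) Assume condition (*) holds for every n ∈ ℕ. Let k ≥ k_0, t ∈ {0,1,2}^k and m ∈ ℕ with k_{m−1} ≤ k < k_m. Then for every n ≥ m, every s ∈ {0,1,2}^{k_n−1} with t ≺ s and every i ∈ {0,1} such that G^i_s ∉ 𝒢_t, there exists a finite sequence u with terms in {0,1,2} such that t ≺ u and G^i_s ⊂_* J_u. -/

import Mathlib

open Pointwise MeasureTheory

namespace CCS

/-- `dSeq a n` is the common length `d_n = ∏_{i=1}^n (1 - a_i)/2` of the intervals of the
`n`-th step of the construction of the central Cantor set `C(a)` (`d_0 = 1`).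
The sequence `a` is indexed from `1`; the value `a 0` is irrelevant. -/
noncomputable def dSeq (a : ℕ → ℝ) (n : ℕ) : ℝ :=
  ∏ i ∈ Finset.Icc 1 n, ((1 - a i) / 2)

/-- Left endpoint of the interval `I_t`, `t ∈ {0,1}^n` (coded as a list, the paper's
`t_j` being `t.getD (j-1) 0`): `l(I_t) = ∑_{j=1}^n t_j (d_{j-1} - d_j)`. -/
noncomputable def Il (a : ℕ → ℝ) (t : List ℕ) : ℝ :=
  ∑ j ∈ Finset.range t.length, (t.getD j 0 : ℝ) * (dSeq a j - dSeq a (j + 1))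

/-- The `n`-th step `C_n(a)` of the construction of the central Cantor set:
the union of the intervals `I_t = [l(I_t), l(I_t) + d_n]` over `t ∈ {0,1}^n`. -/
noncomputable def cantorStep (a : ℕ → ℝ) (n : ℕ) : Set ℝ :=
  ⋃ t ∈ {t : List ℕ | t.length = n ∧ ∀ j ∈ t, j ≤ 1},
    Set.Icc (Il a t) (Il a t + dSeq a n)

/-- The central Cantor set `C(a) = ⋂ₙ C_n(a)`. -/
noncomputable def cantorSet (a : ℕ → ℝ) : Set ℝ := ⋂ n, cantorStep a n

/-- Left endpoint of the interval `J_s = I_t - I_p`, for `s ∈ {0,1,2}^n`: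
`l(J_s) = -1 + ∑_{j=1}^n s_j (d_{j-1} - d_j)`. -/
noncomputable def Jl (a : ℕ → ℝ) (s : List ℕ) : ℝ :=
  -1 + ∑ j ∈ Finset.range s.length, (s.getD j 0 : ℝ) * (dSeq a j - dSeq a (j + 1))

/-- Right endpoint of `J_s`: `r(J_s) = l(J_s) + 2 d_n`. -/
noncomputable def Jr (a : ℕ → ℝ) (s : List ℕ) : ℝ :=
  Jl a s + 2 * dSeq a s.length

/-- The interval `J_s`. -/
noncomputable def Jset (a : ℕ → ℝ) (s : List ℕ) : Set ℝ := Set.Icc (Jl a s) (Jr a s)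

/-- Left endpoint of the gap `G^i_s` (`i = 0`: left gap, `i = 1`: right gap) of `J_s`. -/
noncomputable def Gl (a : ℕ → ℝ) (i : ℕ) (s : List ℕ) : ℝ :=
  Jl a s + (i : ℝ) * (dSeq a s.length - dSeq a (s.length + 1)) + 2 * dSeq a (s.length + 1)

/-- Right endpoint of the gap `G^i_s`. -/
noncomputable def Gr (a : ℕ → ℝ) (i : ℕ) (s : List ℕ) : ℝ :=
  Jl a s + ((i : ℝ) + 1) * (dSeq a s.length - dSeq a (s.length + 1))

/-- The gap `G^i_s ⊆ J_s`, an open interval. -/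
noncomputable def Gset (a : ℕ → ℝ) (i : ℕ) (s : List ℕ) : Set ℝ :=
  Set.Ioo (Gl a i s) (Gr a i s)

/-- `N(0,s) = max {j : s_j > 0}`, `N(1,s) = max {j : s_j < 2}` (1-based, `max ∅ = 0`). -/
noncomputable def Nidx (i : ℕ) (s : List ℕ) : ℕ :=
  sSup {j | 1 ≤ j ∧ j ≤ s.length ∧
    (if i = 0 then 0 < s.getD (j - 1) 0 else s.getD (j - 1) 0 < 2)}

/-- The family `𝒢^{i0}_{s0}(n)` of (indices of) gaps of rank `n`, for
`s0 ∈ {0,1,2}^{k_m - 1}`; a gap `G^i_s` is coded by the pair `(i, s)`.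
`𝒢^{i0}_{s0}(m) = {G^{i0}_{s0}}` and for `n > m`,
`𝒢^{i0}_{s0}(n)` consists of the gap `Ḡ^{i0}_{s0}(n)` together with the gaps
`Ḡ^1_{t^j}(n)`, `Ḡ^0_{t^(j+1)}(n)` for all `G^j_t ∈ 𝒢^{i0}_{s0}(l)`, `m ≤ l < n`. -/
def gapFamily (k : ℕ → ℕ) (i0 : ℕ) (s0 : List ℕ) (m : ℕ) (n : ℕ) : Set (ℕ × List ℕ) :=
  if n ≤ m then {(i0, s0)}
  else
    {(i0, s0 ++ List.replicate (k n - k m) (2 * i0))} ∪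
      ⋃ (l : ℕ) (_ : m ≤ l) (hl : l < n),
        ⋃ p ∈ gapFamily k i0 s0 m l,
          ({(1, p.2 ++ p.1 :: List.replicate (k n - k l - 1) 2),
            (0, p.2 ++ (p.1 + 1) :: List.replicate (k n - k l - 1) 0)} : Set (ℕ × List ℕ))
termination_by n
decreasing_by exact hl

/-- The family `𝒢^{i0}_{s0} = ⋃_{n ≥ m} 𝒢^{i0}_{s0}(n)`. -/
def gapFamilyAll (k : ℕ → ℕ) (i0 : ℕ) (s0 : List ℕ) (m : ℕ) : Set (ℕ × List ℕ) :=
  ⋃ (n : ℕ) (_ : m ≤ n), gapFamily k i0 s0 m n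

/-- The family `𝒢_t := 𝒢^0_{t ++ 0^{(k_m - |t| - 1)}} ∪ 𝒢^1_{t ++ 2^{(k_m - |t| - 1)}}`
for `t ∈ {0,1,2}^k` with `k_{m-1} ≤ k < k_m`. -/
def gapFamilyT (k : ℕ → ℕ) (m : ℕ) (t : List ℕ) : Set (ℕ × List ℕ) :=
  gapFamilyAll k 0 (t ++ List.replicate (k m - t.length - 1) 0) m ∪
    gapFamilyAll k 1 (t ++ List.replicate (k m - t.length - 1) 2) m

/-- The union `⋃ 𝒢` of a family of (indices of) gaps, as a subset of `ℝ`. -/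
noncomputable def gapUnion (a : ℕ → ℝ) (G : Set (ℕ × List ℕ)) : Set ℝ :=
  ⋃ p ∈ G, Gset a p.1 p.2

/-- `padSeq k c s m n` is the index of the gap `G^i(s,n)` (for `c = 2i`):
`s ++ c^{(k_m - |s| - 1)} ++ 1 ++ c^{(k_{m+1} - k_m - 1)} ++ 1 ++ ⋯ ++ 1 ++ c^{(k_n - k_{n-1} - 1)}`. -/
def padSeq (k : ℕ → ℕ) (c : ℕ) (s : List ℕ) (m : ℕ) : ℕ → List ℕ
  | 0 => s ++ List.replicate (k m - s.length - 1) c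
  | n + 1 =>
    if n + 1 ≤ m then s ++ List.replicate (k m - s.length - 1) c
    else padSeq k c s m n ++ 1 :: List.replicate (k (n + 1) - k n - 1) c

/-- `δ_n := min {3d_i - d_{i-1} : k_{n-1} + 1 ≤ i ≤ k_n - 1}` (as an element of `EReal`,
so that `min ∅ = ⊤ = ∞`). -/
noncomputable def deltaMin (a : ℕ → ℝ) (k : ℕ → ℕ) (n : ℕ) : EReal :=
  sInf ((fun i => ((3 * dSeq a i - dSeq a (i - 1) : ℝ) : EReal)) ''
    (Set.Icc (k (n - 1) + 1) (k n - 1)))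

/-- `Δ_n := max {3d_i - d_{i-1} : k_{n-1} + 1 ≤ i ≤ k_n - 1}` (`max ∅ = ⊥ = -∞`). -/
noncomputable def deltaMax (a : ℕ → ℝ) (k : ℕ → ℕ) (n : ℕ) : EReal :=
  sSup ((fun i => ((3 * dSeq a i - dSeq a (i - 1) : ℝ) : EReal)) ''
    (Set.Icc (k (n - 1) + 1) (k n - 1)))

/-- `m_n := min { δ_n - (d_{k_n - 1} - d_{k_n}), 4 d_{k_n} - Δ_n }`. -/
noncomputable def mSeq (a : ℕ → ℝ) (k : ℕ → ℕ) (n : ℕ) : EReal :=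
  min (deltaMin a k n - ((dSeq a (k n - 1) - dSeq a (k n) : ℝ) : EReal))
    (((4 * dSeq a (k n) : ℝ) : EReal) - deltaMax a k n)

/-- `∑_{i=n+1}^∞ (d_{k_i - 1} - d_{k_i})`. -/
noncomputable def tailSum (a : ℕ → ℝ) (k : ℕ → ℕ) (n : ℕ) : ℝ :=
  ∑' i : ℕ, (dSeq a (k (n + 1 + i) - 1) - dSeq a (k (n + 1 + i)))

/-- Condition `(*)`: `m_n ≥ 2 ∑_{i=n+1}^∞ (d_{k_i - 1} - d_{k_i})` for every `n ∈ ℕ`. -/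
def condStar (a : ℕ → ℝ) (k : ℕ → ℕ) : Prop :=
  ∀ n : ℕ, 1 ≤ n → ((2 * tailSum a k n : ℝ) : EReal) ≤ mSeq a k n

/-- `(k_n)_{n ≥ 1}` is the increasing enumeration of all indices greater than `k 0 = k₀`
at which `a` exceeds `1/3`. -/
def IsGapEnum (a : ℕ → ℝ) (k : ℕ → ℕ) : Prop :=
  StrictMono k ∧ (∀ n, 1 ≤ n → k 0 < k n ∧ 1 / 3 < a (k n)) ∧
    (∀ j, k 0 < j → 1 / 3 < a j → ∃ n, 1 ≤ n ∧ k n = j)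

/-- `G` is a gap of `E`: a bounded connected component of `ℝ ∖ E`. -/
def IsGapOf (E G : Set ℝ) : Prop :=
  (∃ x ∉ E, G = connectedComponentIn Eᶜ x) ∧ Bornology.IsBounded G

/-- `C` is a proper (nontrivial) connected component of `E`. -/
def IsProperComponentOf (E C : Set ℝ) : Prop :=
  (∃ x ∈ E, C = connectedComponentIn E x) ∧ C.Nontrivial

/-- `E` is a Cantorval: a perfect set with infinitely many gaps such that both endpoints
of every gap are accumulated both by gaps and by proper components of `E`. -/
def IsCantorval (E : Set ℝ) : Prop :=
  Perfect E ∧ {G : Set ℝ | IsGapOf E G}.Infinite ∧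
    ∀ G, IsGapOf E G → ∀ p, p = sInf G ∨ p = sSup G →
      (∀ ε > 0, ∃ G', IsGapOf E G' ∧ G' ≠ G ∧ G' ⊆ Set.Ioo (p - ε) (p + ε)) ∧
      (∀ ε > 0, ∃ C, IsProperComponentOf E C ∧ C ⊆ Set.Ioo (p - ε) (p + ε))

/-- `J_s` and `J_u` (of length `k_m - 1`) are associated:
`N := N(0,s) = N(1,u) ∈ {k_{m-1}+1, …, k_m - 1}`, `s|(N-1) = u|(N-1)`, `u_N = s_N - 1`.
Then `J_u` is the interval covering `𝒢^0_s` and `J_s` is the interval covering `𝒢^1_u`. -/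
def Associated (k : ℕ → ℕ) (m : ℕ) (s u : List ℕ) : Prop :=
  s.length = k m - 1 ∧ u.length = k m - 1 ∧
    Nidx 0 s = Nidx 1 u ∧
    k (m - 1) + 1 ≤ Nidx 0 s ∧ Nidx 0 s ≤ k m - 1 ∧
    s.take (Nidx 0 s - 1) = u.take (Nidx 0 s - 1) ∧
    u.getD (Nidx 0 s - 1) 0 = s.getD (Nidx 0 s - 1) 0 - 1

/-- `G^i_g ⊂_* J_v`: the gap `G^i_g` is covered by the interval `J_v`, i.e. `G^i_g`
belongs to a family `𝒢^0_w` (resp. `𝒢^1_w`) such that `J_v` is the interval covering it. -/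
def CoversGap (k : ℕ → ℕ) (i : ℕ) (g : List ℕ) (v : List ℕ) : Prop :=
  ∃ m w, 1 ≤ m ∧
    ((Associated k m w v ∧ (i, g) ∈ gapFamilyAll k 0 w m) ∨
      (Associated k m v w ∧ (i, g) ∈ gapFamilyAll k 1 w m))

/-- The achievement set `E(x) = {∑_{j ∈ A} x_j : A ⊆ ℕ}` of a series (indexed from `1`). -/
def achievementSet (x : ℕ → ℝ) : Set ℝ :=
  {y | ∃ A : Set ℕ, A ⊆ {n | 1 ≤ n} ∧ HasSum (A.indicator x) y}


-- ===== auxiliary lemmas =====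

lemma Nidx_eq_of (i : ℕ) (s : List ℕ) (N : ℕ) (h1 : 1 ≤ N) (h2 : N ≤ s.length)
    (hN : if i = 0 then 0 < s.getD (N - 1) 0 else s.getD (N - 1) 0 < 2)
    (habove : ∀ j, N < j → j ≤ s.length →
      ¬ (if i = 0 then 0 < s.getD (j - 1) 0 else s.getD (j - 1) 0 < 2)) :
    Nidx i s = N := by
  apply IsGreatest.csSup_eq
  refine ⟨⟨h1, h2, hN⟩, ?_⟩
  rintro j ⟨hj1, hj2, hj3⟩
  by_contra h
  exact habove j (by omega) hj2 hj3

lemma Nidx_spec (i : ℕ) (s : List ℕ) :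
    (Nidx i s = 0 ∨ (1 ≤ Nidx i s ∧ Nidx i s ≤ s.length ∧
      (if i = 0 then 0 < s.getD (Nidx i s - 1) 0 else s.getD (Nidx i s - 1) 0 < 2))) ∧
    ∀ j, Nidx i s < j → j ≤ s.length →
      ¬ (if i = 0 then 0 < s.getD (j - 1) 0 else s.getD (j - 1) 0 < 2) := by
  unfold Nidx
  set S : Set ℕ := {j | 1 ≤ j ∧ j ≤ s.length ∧
    (if i = 0 then 0 < s.getD (j - 1) 0 else s.getD (j - 1) 0 < 2)} with hS
  have hbdd : BddAbove S := ⟨s.length, fun j hj => hj.2.1⟩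
  by_cases hne : S.Nonempty
  · have hmem : sSup S ∈ S := Nat.sSup_mem hne hbdd
    have hub : ∀ j ∈ S, j ≤ sSup S := fun j hj => le_csSup hbdd hj
    refine ⟨Or.inr ⟨hmem.1, hmem.2.1, hmem.2.2⟩, ?_⟩
    intro j hj1 hj2 hj3
    exact absurd (hub j ⟨by omega, hj2, hj3⟩) (by omega)
  · have hempty : S = ∅ := Set.not_nonempty_iff_eq_empty.mp hne
    have h0 : sSup S = 0 := by rw [hempty]; exact csSup_empty
    refine ⟨Or.inl h0, ?_⟩
    intro j hj1 hj2 hj3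
    exact hne ⟨j, by omega, hj2, hj3⟩

lemma getD_take (s : List ℕ) (K idx : ℕ) (h : idx < K) :
    (s.take K).getD idx 0 = s.getD idx 0 := by
  by_cases h2 : idx < s.length
  · rw [List.getD_eq_getElem _ _ (by simp [List.length_take]; omega),
      List.getD_eq_getElem _ _ h2]
    exact List.getElem_take
  · rw [List.getD_eq_default _ _ (by simp [List.length_take]; omega),
      List.getD_eq_default _ _ (by omega)]

lemma getD_replicate (n a idx : ℕ) (h : idx < n) :
    (List.replicate n a).getD idx 0 = a := by
  rw [List.getD_eq_getElem _ _ (by simp [h])]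
  exact List.getElem_replicate _

lemma getD_mid_above (q : List ℕ) (c x r idx : ℕ)
    (h1 : q.length < idx) (h2 : idx < q.length + 1 + r) :
    (q ++ c :: List.replicate r x).getD idx 0 = x := by
  rw [List.getD_append_right _ _ _ _ (by omega)]
  have h3 : idx - q.length = (idx - q.length - 1) + 1 := by omega
  rw [h3, List.getD_cons_succ]
  exact getD_replicate _ _ _ (by omega)

lemma drop_eq_replicate (s : List ℕ) (N e : ℕ)
    (h : ∀ idx, N ≤ idx → idx < s.length → s.getD idx 0 = e) :
    s.drop N = List.replicate (s.length - N) e := by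
  rw [List.eq_replicate_iff]
  refine ⟨by simp, ?_⟩
  intro b hb
  rw [List.mem_iff_getElem] at hb
  obtain ⟨n, hn, hbn⟩ := hb
  have hlen : n < s.length - N := by simpa using hn
  have := h (N + n) (by omega) (by omega)
  rw [List.getD_eq_getElem _ _ (by omega)] at this
  rw [← hbn, List.getElem_drop]
  exact this

lemma gapFamily_base (k : ℕ → ℕ) (i0 : ℕ) (s0 : List ℕ) (m n : ℕ) (h : n ≤ m) :
    (i0, s0) ∈ gapFamily k i0 s0 m n := by
  rw [gapFamily]; simp [h]

lemma gapFamily_left (k : ℕ → ℕ) (i0 : ℕ) (s0 : List ℕ) (m n : ℕ) (h : m < n) :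
    (i0, s0 ++ List.replicate (k n - k m) (2 * i0)) ∈ gapFamily k i0 s0 m n := by
  rw [gapFamily]
  simp only [Nat.not_le.mpr h, if_false]
  exact Set.mem_union_left _ rfl

lemma gapFamily_child (k : ℕ → ℕ) (i0 : ℕ) (s0 : List ℕ) (m l n j : ℕ) (p : List ℕ)
    (hml : m ≤ l) (hln : l < n) (hp : (j, p) ∈ gapFamily k i0 s0 m l) :
    (1, p ++ j :: List.replicate (k n - k l - 1) 2) ∈ gapFamily k i0 s0 m n ∧
    (0, p ++ (j + 1) :: List.replicate (k n - k l - 1) 0) ∈ gapFamily k i0 s0 m n := by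
  have hmn : ¬ n ≤ m := by omega
  rw [gapFamily]
  simp only [hmn, if_false]
  constructor
  · refine Set.mem_union_right _ ?_
    refine Set.mem_iUnion.mpr ⟨l, Set.mem_iUnion.mpr ⟨hml, Set.mem_iUnion.mpr ⟨hln, ?_⟩⟩⟩
    refine Set.mem_iUnion.mpr ⟨(j, p), Set.mem_iUnion.mpr ⟨hp, ?_⟩⟩
    exact Set.mem_insert _ _
  · refine Set.mem_union_right _ ?_
    refine Set.mem_iUnion.mpr ⟨l, Set.mem_iUnion.mpr ⟨hml, Set.mem_iUnion.mpr ⟨hln, ?_⟩⟩⟩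
    refine Set.mem_iUnion.mpr ⟨(j, p), Set.mem_iUnion.mpr ⟨hp, ?_⟩⟩
    exact Set.mem_insert_of_mem _ rfl

lemma gapFamily_elim (k : ℕ → ℕ) (i0 : ℕ) (s0 : List ℕ) (m n : ℕ) (q : ℕ × List ℕ)
    (hq : q ∈ gapFamily k i0 s0 m n) :
    (n ≤ m ∧ q = (i0, s0)) ∨
    (m < n ∧ (q = (i0, s0 ++ List.replicate (k n - k m) (2 * i0)) ∨
      ∃ l j p, m ≤ l ∧ l < n ∧ (j, p) ∈ gapFamily k i0 s0 m l ∧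
        (q = (1, p ++ j :: List.replicate (k n - k l - 1) 2) ∨
         q = (0, p ++ (j + 1) :: List.replicate (k n - k l - 1) 0)))) := by
  rw [gapFamily] at hq
  by_cases h : n ≤ m
  · simp only [h, if_true] at hq
    exact Or.inl ⟨h, hq⟩
  · simp only [h, if_false] at hq
    refine Or.inr ⟨by omega, ?_⟩
    rcases hq with hq | hq
    · exact Or.inl hq
    · simp only [Set.mem_iUnion] at hq
      obtain ⟨l, hml, hln, p, hp, hq⟩ := hq
      exact Or.inr ⟨l, p.1, p.2, hml, hln, hp, hq⟩

lemma gapFamily_length (k : ℕ → ℕ) (hk : StrictMono k) (i0 : ℕ) (s0 : List ℕ) (m : ℕ)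
    (hm : 1 ≤ m) (hs0 : s0.length = k m - 1) :
    ∀ n q, q ∈ gapFamily k i0 s0 m n → q.2.length = k (max m n) - 1 := by
  intro n
  induction n using Nat.strong_induction_on with
  | _ n ih =>
    intro q hq
    have hk1 : 1 ≤ k m := by have := hk (show 0 < m by omega); omega
    rcases gapFamily_elim k i0 s0 m n q hq with ⟨h, rfl⟩ | ⟨h, hq⟩
    · simpa [Nat.max_eq_left h] using hs0
    · have hmax : max m n = n := Nat.max_eq_right (by omega)
      have hkn : k m ≤ k n := hk.le_iff_le.mpr (by omega)
      rcases hq with rfl | ⟨l, j, p, hml, hln, hp, hq⟩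
      · simp [hmax, hs0]; omega
      · have hpl : p.length = k (max m l) - 1 := ih l hln (j, p) hp
        rw [Nat.max_eq_right hml] at hpl
        have hkl1 : 1 ≤ k l := le_trans hk1 (hk.le_iff_le.mpr hml)
        have hkln : k l < k n := hk hln
        rcases hq with rfl | rfl <;> simp [hmax, hpl] <;> omega

lemma gapFamilyAll_inv (k : ℕ → ℕ) (hk : StrictMono k) (i0 : ℕ) (s0 : List ℕ) (m : ℕ)
    (hm : 1 ≤ m) (hs0 : s0.length = k m - 1) (q : ℕ × List ℕ)
    (hq : q ∈ gapFamilyAll k i0 s0 m) (l : ℕ) (hml : m ≤ l)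
    (hl1 : 1 ≤ l) (hlen : q.2.length = k l - 1) : q ∈ gapFamily k i0 s0 m l := by
  obtain ⟨n, hn⟩ := Set.mem_iUnion.mp hq
  simp only [Set.mem_iUnion] at hn
  obtain ⟨hmn, hn⟩ := hn
  have hql := gapFamily_length k hk i0 s0 m hm hs0 n q hn
  rw [Nat.max_eq_right hmn] at hql
  have hkl1 : 1 ≤ k l := by have := hk (show 0 < l by omega); omega
  have hkn1 : 1 ≤ k n := by have := hk (show 0 < n by omega); omega
  have h1 : k n = k l := by omega
  have h2 : n = l := hk.injective h1
  rwa [← h2]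

lemma gapFamily_mem_all (k : ℕ → ℕ) (i0 : ℕ) (s0 : List ℕ) (m n : ℕ) (hmn : m ≤ n)
    {q : ℕ × List ℕ} (hq : q ∈ gapFamily k i0 s0 m n) : q ∈ gapFamilyAll k i0 s0 m := by
  exact Set.mem_iUnion.mpr ⟨n, Set.mem_iUnion.mpr ⟨hmn, hq⟩⟩

lemma claim2_core (k : ℕ → ℕ) (hkmono : StrictMono k)
    (t : List ℕ) (htk0 : k 0 ≤ t.length)
    (m : ℕ) (hm : 1 ≤ m) (hm1 : k (m - 1) ≤ t.length) (hm2 : t.length < k m) :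
    ∀ n, m ≤ n → ∀ s : List ℕ, (∀ x ∈ s, x ≤ 2) → s.length = k n - 1 → t <+: s →
      ∀ i ≤ 1, (i, s) ∉ gapFamilyT k m t →
        ∃ i0 w u m', 1 ≤ m' ∧ m' ≤ n ∧ (∀ x ∈ u, x ≤ 2) ∧ t <+: u ∧
          (i, s) ∈ gapFamily k i0 w m' n ∧
          ((i0 = 0 ∧ Associated k m' w u) ∨ (i0 = 1 ∧ Associated k m' u w)) := by
  have hkm1 : 1 ≤ k m := by have := hkmono (show 0 < m by omega); omega
  intro n
  induction n using Nat.strong_induction_on with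
  | _ n ih =>
    intro hmn s hs2 hslen hts i hi hnotin
    have hkmn : k m ≤ k n := hkmono.le_iff_le.mpr hmn
    have hkn1 : 1 ≤ k n := by omega
    -- the extreme value
    have hi01 : i = 0 ∨ i = 1 := by omega
    set e : ℕ := 2 * i with he
    set N : ℕ := Nidx i s with hN
    obtain ⟨hN0, habove⟩ := Nidx_spec i s
    rw [← hN] at hN0 habove
    -- all entries strictly after position N equal e
    have hext : ∀ idx, N ≤ idx → idx < s.length → s.getD idx 0 = e := by
      intro idx h1 h2
      have h3 := habove (idx + 1) (by omega) (by omega)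
      simp only [Nat.add_sub_cancel] at h3
      have h4 : s.getD idx 0 ≤ 2 := by
        rw [List.getD_eq_getElem _ _ h2]
        exact hs2 _ (List.getElem_mem h2)
      rw [he]
      rcases hi01 with hi0 | hi0
      · rw [hi0, if_pos (rfl : (0:ℕ) = 0)] at h3
        rw [hi0]; omega
      · rw [hi0, if_neg (by norm_num : ¬(1:ℕ) = 0)] at h3
        rw [hi0]; omega
    have hts' : t = s.take t.length := List.prefix_iff_eq_take.mp hts
    have htlen : t.length ≤ s.length := hts.length_le
    by_cases hNt : N ≤ t.length
    -- Case 1 : s = t ++ e^(...), so (i,s) ∈ 𝒢_t, contradiction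
    · exfalso
      apply hnotin
      have hdrop : s.drop t.length = List.replicate (s.length - t.length) e :=
        drop_eq_replicate s t.length e (fun idx h1 h2 => hext idx (by omega) h2)
      have hsdecomp : s = t ++ List.replicate (s.length - t.length) (2 * i) := by
        conv_lhs => rw [← List.take_append_drop t.length s]
        rw [← hts', hdrop, he]
      unfold gapFamilyT
      rcases hi01 with hi0 | hi0 <;> rw [hi0] at hsdecomp ⊢
      · apply Set.mem_union_left
        rcases Nat.lt_or_ge m n with hmn' | hmn'
        · apply gapFamily_mem_all k 0 _ m n hmn
          have := gapFamily_left k 0 (t ++ List.replicate (k m - t.length - 1) 0) m n hmn'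
          have heq : (t ++ List.replicate (k m - t.length - 1) 0) ++
              List.replicate (k n - k m) (2 * 0) = s := by
            rw [hsdecomp, List.append_assoc, ← List.replicate_add]
            congr 2
            omega
          rwa [heq] at this
        · have hnm : n = m := by omega
          apply gapFamily_mem_all k 0 _ m n hmn
          have := gapFamily_base k 0 (t ++ List.replicate (k m - t.length - 1) 0) m n (by omega)
          have heq : t ++ List.replicate (k m - t.length - 1) 0 = s := by
            rw [hsdecomp]
            congr 2
            rw [hslen, hnm]
            omega
          rw [← heq]
          exact gapFamily_base k 0 _ m n (by omega)
      · apply Set.mem_union_right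
        rcases Nat.lt_or_ge m n with hmn' | hmn'
        · apply gapFamily_mem_all k 1 _ m n hmn
          have := gapFamily_left k 1 (t ++ List.replicate (k m - t.length - 1) 2) m n hmn'
          have heq : (t ++ List.replicate (k m - t.length - 1) 2) ++
              List.replicate (k n - k m) (2 * 1) = s := by
            rw [hsdecomp, List.append_assoc, ← List.replicate_add]
            congr 1
            congr 1
            omega
          rwa [heq] at this
        · have hnm : n = m := by omega
          apply gapFamily_mem_all k 1 _ m n hmn
          have := gapFamily_base k 1 (t ++ List.replicate (k m - t.length - 1) 2) m n (by omega)
          have heq : t ++ List.replicate (k m - t.length - 1) 2 = s := by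
            rw [hsdecomp]
            congr 2
            rw [hslen, hnm]
            omega
          rw [← heq]
          exact gapFamily_base k 1 _ m n (by omega)
    -- Case 2 : N > t.length
    · push_neg at hNt
      have hN1 : 1 ≤ N := by omega
      obtain ⟨_, hNlen, hPN⟩ : 1 ≤ N ∧ N ≤ s.length ∧
          (if i = 0 then 0 < s.getD (N - 1) 0 else s.getD (N - 1) 0 < 2) := by
        rcases hN0 with h | h
        · omega
        · exact h
      set v : ℕ := s.getD (N - 1) 0 with hv
      have hv2 : v ≤ 2 := by
        rw [hv, List.getD_eq_getElem _ _ (by omega)]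
        exact hs2 _ (List.getElem_mem (by omega))
      by_cases hkidx : ∃ l, 1 ≤ l ∧ l ≤ n ∧ k l = N
      -- Case 2a : N = k l, recurse
      · obtain ⟨l, hl1, hln', hkl⟩ := hkidx
        have hlm : m ≤ l := by
          have : k (m - 1) < k l := by omega
          have := hkmono.lt_iff_lt.mp this
          omega
        have hlln : l < n := by
          have : k l < k n := by omega
          exact hkmono.lt_iff_lt.mp this
        set p : List ℕ := s.take (k l - 1) with hp
        have hkln : k l < k n := hkmono hlln
        have hplen : p.length = k l - 1 := by
          rw [hp, List.length_take]; omega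
        have hpdecomp : s = p ++ v :: List.replicate (k n - k l - 1) e := by
          conv_lhs => rw [← List.take_append_drop (k l - 1) s]
          congr 1
          rw [List.drop_eq_getElem_cons (show k l - 1 < s.length by omega)]
          congr 1
          · rw [hv, List.getD_eq_getElem _ _ (by omega)]
            congr 1
            omega
          · have : k l - 1 + 1 = N := by omega
            rw [this]
            have := drop_eq_replicate s N e (fun idx h1 h2 => hext idx h1 h2)
            rw [this]
            congr 1
            omega
        have hps2 : ∀ x ∈ p, x ≤ 2 := fun x hx => hs2 x (List.take_subset _ _ hx)
        have htp : t <+: p := List.prefix_take_iff.mpr ⟨hts, by omega⟩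
        -- the child value j
        have hj : ∃ j, j ≤ 1 ∧ ((i = 0 ∧ v = j + 1) ∨ (i = 1 ∧ v = j)) := by
          rcases hi01 with hi0 | hi0
          · rw [hi0, if_pos (rfl : (0:ℕ) = 0)] at hPN
            exact ⟨v - 1, by omega, Or.inl ⟨hi0, by omega⟩⟩
          · rw [hi0, if_neg (by norm_num : ¬(1:ℕ) = 0)] at hPN
            exact ⟨v, by omega, Or.inr ⟨hi0, rfl⟩⟩
        obtain ⟨j, hjle, hjcase⟩ := hj
        -- s is the child of (j, p)
        have hchild : ∀ i0' w' m'', m'' ≤ l → (j, p) ∈ gapFamily k i0' w' m'' l →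
            (i, s) ∈ gapFamily k i0' w' m'' n := by
          intro i0' w' m'' hm''l hmem
          have hc := gapFamily_child k i0' w' m'' l n j p hm''l hlln hmem
          rcases hjcase with ⟨hi0, hvj⟩ | ⟨hi0, hvj⟩
          · have hseq : s = p ++ (j + 1) :: List.replicate (k n - k l - 1) 0 := by
              rw [hpdecomp, hvj, he, hi0] <;> norm_num
            rw [hi0, hseq]; exact hc.2
          · have hseq : s = p ++ j :: List.replicate (k n - k l - 1) 2 := by
              rw [hpdecomp, hvj, he, hi0] <;> norm_num
            rw [hi0, hseq]; exact hc.1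
        -- (j, p) ∉ 𝒢_t
        have hpnotin : (j, p) ∉ gapFamilyT k m t := by
          intro hmem
          apply hnotin
          unfold gapFamilyT at hmem ⊢
          rcases hmem with hmem | hmem
          · have hs0len : (t ++ List.replicate (k m - t.length - 1) 0).length = k m - 1 := by
              simp; omega
            have := gapFamilyAll_inv k hkmono 0 _ m hm hs0len (j, p) hmem l hlm hl1 hplen
            exact Set.mem_union_left _
              (gapFamily_mem_all k 0 _ m n hmn (hchild 0 _ m hlm this))
          · have hs0len : (t ++ List.replicate (k m - t.length - 1) 2).length = k m - 1 := by
              simp; omega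
            have := gapFamilyAll_inv k hkmono 1 _ m hm hs0len (j, p) hmem l hlm hl1 hplen
            exact Set.mem_union_right _
              (gapFamily_mem_all k 1 _ m n hmn (hchild 1 _ m hlm this))
        obtain ⟨i0, w, u, m', hm'1, hm'l, hu2, htu, hmem', hassoc⟩ :=
          ih l hlln hlm p hps2 hplen htp j hjle hpnotin
        exact ⟨i0, w, u, m', hm'1, by omega, hu2, htu, hchild i0 w m' hm'l hmem', hassoc⟩
      -- Case 2b : N is not a k-index; base construction
      · push_neg at hkidx
        have hNkn : N < k n := by omega
        have hex : ∃ l, N < k l := ⟨n, hNkn⟩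
        set l : ℕ := Nat.find hex with hldef
        have hlN : N < k l := Nat.find_spec hex
        have hlle : l ≤ n := Nat.find_le hNkn
        have hl1 : 1 ≤ l := by
          rcases Nat.eq_zero_or_pos l with h | h
          · exfalso
            have := hlN
            rw [h] at this
            omega
          · omega
        have hklN : k (l - 1) < N := by
          have h1 : ¬ N < k (l - 1) := Nat.find_min hex (by omega)
          rcases Nat.eq_zero_or_pos (l - 1) with h | h
          · rw [h]; omega
          · have := hkidx (l - 1) h (by omega)
            omega
        have hkll : k l ≤ k n := hkmono.le_iff_le.mpr hlle
        have hNkl : N ≤ k l - 1 := by omega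
        set w : List ℕ := s.take (k l - 1) with hw
        have hwlen : w.length = k l - 1 := by
          rw [hw, List.length_take]; omega
        have hwdecomp : s = w ++ List.replicate (k n - k l) e := by
          conv_lhs => rw [← List.take_append_drop (k l - 1) s]
          congr 1
          have := drop_eq_replicate s (k l - 1) e
            (fun idx h1 h2 => hext idx (by omega) h2)
          rw [this]
          congr 1
          omega
        -- membership of (i, s)
        have hmem : (i, s) ∈ gapFamily k i w l n := by
          rcases Nat.lt_or_ge l n with hln' | hln'
          · have := gapFamily_left k i w l n hln'
            rwa [← he, ← hwdecomp] at this
          · have hnl : n = l := by omega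
            have hknl : k n ≤ k l := hkmono.le_iff_le.mpr hln'
            have hwzero : k n - k l = 0 := by omega
            have : s = w := by
              rw [hwdecomp, hwzero]
              simp
            rw [this]
            exact gapFamily_base k i w l n (by omega)
        -- common getD facts
        have hgetw : ∀ idx, idx < k l - 1 → w.getD idx 0 = s.getD idx 0 :=
          fun idx h => getD_take s (k l - 1) idx h
        have hstakelen : (s.take (N - 1)).length = N - 1 := by
          rw [List.length_take]; omega
        have hwtake : w.take (N - 1) = s.take (N - 1) := by
          rw [hw, List.take_take]
          congr 1
          omega
        have htu' : t <+: s.take (N - 1) := List.prefix_take_iff.mpr ⟨hts, by omega⟩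
        have hwabove : ∀ jj, N < jj → jj ≤ k l - 1 → w.getD (jj - 1) 0 = s.getD (jj - 1) 0 :=
          fun jj h1 h2 => hgetw (jj - 1) (by omega)
        rcases hi01 with hi0 | hi0
        · -- i = 0 : left gap
          have hPN' : 0 < v := by
            rw [hi0, if_pos (rfl : (0:ℕ) = 0)] at hPN
            exact hPN
          set u : List ℕ := s.take (N - 1) ++ (v - 1) :: List.replicate (k l - 1 - N) 2
            with hu
          have hulen : u.length = k l - 1 := by
            rw [hu]
            simp only [List.length_append, List.length_cons, List.length_replicate, hstakelen]
            omega
          have hu_at : u.getD (N - 1) 0 = v - 1 := by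
            rw [hu, List.getD_append_right _ _ _ _ (by omega), hstakelen]
            simp
          have hu_above : ∀ jj, N < jj → jj ≤ k l - 1 → u.getD (jj - 1) 0 = 2 := by
            intro jj h1 h2
            exact getD_mid_above _ _ _ _ _ (by omega) (by rw [hstakelen]; omega)
          have hNw : Nidx 0 w = N := by
            apply Nidx_eq_of 0 w N hN1 (by omega)
            · rw [if_pos (rfl : (0:ℕ) = 0), hgetw (N - 1) (by omega)]
              exact hPN'
            · intro jj h1 h2
              rw [if_pos (rfl : (0:ℕ) = 0), hwabove jj h1 (by omega)]
              have h3 := habove jj (by omega) (by omega)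
              rw [hi0, if_pos (rfl : (0:ℕ) = 0)] at h3
              exact h3
          have hNu : Nidx 1 u = N := by
            apply Nidx_eq_of 1 u N hN1 (by omega)
            · rw [if_neg (by norm_num : ¬(1:ℕ) = 0), hu_at]
              omega
            · intro jj h1 h2
              rw [if_neg (by norm_num : ¬(1:ℕ) = 0), hu_above jj h1 (by omega)]
              omega
          have hassoc : Associated k l w u := by
            refine ⟨by omega, hulen, by rw [hNw, hNu], ?_, ?_, ?_, ?_⟩
            · rw [hNw]; omega
            · rw [hNw]; omega
            · rw [hNw, hwtake, hu, List.take_left' hstakelen]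
            · rw [hNw, hu_at, hgetw (N - 1) (by omega)]
          have hu2 : ∀ x ∈ u, x ≤ 2 := by
            intro x hx
            rw [hu, List.mem_append, List.mem_cons] at hx
            rcases hx with hx | hx | hx
            · exact hs2 x (List.take_subset _ _ hx)
            · omega
            · rw [List.eq_of_mem_replicate hx]
          have htu : t <+: u := htu'.trans (hu ▸ List.prefix_append _ _)
          rw [hi0] at hmem
          refine ⟨0, w, u, l, hl1, hlle, hu2, htu, ?_, Or.inl ⟨rfl, hassoc⟩⟩
          rw [hi0]
          exact hmem
        · -- i = 1 : right gap
          have hPN' : v < 2 := by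
            rw [hi0, if_neg (by norm_num : ¬(1:ℕ) = 0)] at hPN
            exact hPN
          set u : List ℕ := s.take (N - 1) ++ (v + 1) :: List.replicate (k l - 1 - N) 0
            with hu
          have hulen : u.length = k l - 1 := by
            rw [hu]
            simp only [List.length_append, List.length_cons, List.length_replicate, hstakelen]
            omega
          have hu_at : u.getD (N - 1) 0 = v + 1 := by
            rw [hu, List.getD_append_right _ _ _ _ (by omega), hstakelen]
            simp
          have hu_above : ∀ jj, N < jj → jj ≤ k l - 1 → u.getD (jj - 1) 0 = 0 := by
            intro jj h1 h2
            exact getD_mid_above _ _ _ _ _ (by omega) (by rw [hstakelen]; omega)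
          have hNw : Nidx 1 w = N := by
            apply Nidx_eq_of 1 w N hN1 (by omega)
            · rw [if_neg (by norm_num : ¬(1:ℕ) = 0), hgetw (N - 1) (by omega)]
              exact hPN'
            · intro jj h1 h2
              rw [if_neg (by norm_num : ¬(1:ℕ) = 0), hwabove jj h1 (by omega)]
              have h3 := hext (jj - 1) (by omega) (by omega)
              rw [he, hi0] at h3
              omega
          have hNu : Nidx 0 u = N := by
            apply Nidx_eq_of 0 u N hN1 (by omega)
            · rw [if_pos (rfl : (0:ℕ) = 0), hu_at]
              omega
            · intro jj h1 h2
              rw [if_pos (rfl : (0:ℕ) = 0), hu_above jj h1 (by omega)]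
              omega
          have hassoc : Associated k l u w := by
            refine ⟨hulen, by omega, by rw [hNw, hNu], ?_, ?_, ?_, ?_⟩
            · rw [hNu]; omega
            · rw [hNu]; omega
            · rw [hNu, hwtake, hu, List.take_left' hstakelen]
            · rw [hNu, hu_at, hgetw (N - 1) (by omega)]
              omega
          have hu2 : ∀ x ∈ u, x ≤ 2 := by
            intro x hx
            rw [hu, List.mem_append, List.mem_cons] at hx
            rcases hx with hx | hx | hx
            · exact hs2 x (List.take_subset _ _ hx)
            · omega
            · rw [List.eq_of_mem_replicate hx]; omega
          have htu : t <+: u := htu'.trans (hu ▸ List.prefix_append _ _)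
          rw [hi0] at hmem
          refine ⟨1, w, u, l, hl1, hlle, hu2, htu, ?_, Or.inr ⟨rfl, hassoc⟩⟩
          rw [hi0]
          exact hmem
/-- Claim 2: under condition `(*)`, for every `n ≥ m`, every `s ∈ {0,1,2}^{kₙ-1}` with
`t ≺ s` and every `i ∈ {0,1}` with `G^i_s ∉ 𝒢_t`, there is a finite sequence `u` with
terms in `{0,1,2}` such that `t ≺ u` and `G^i_s ⊂_* J_u`. -/
theorem claim2_exists_covering (a : ℕ → ℝ) (k : ℕ → ℕ)
    (ha : ∀ n, 1 ≤ n → 0 < a n ∧ a n < 1)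
    (hinf : {n : ℕ | 1 ≤ n ∧ 1 / 3 < a n}.Infinite)
    (hk0 : a (k 0 + 1) < 1 / 3)
    (hk : IsGapEnum a k)
    (hstar : condStar a k)
    (t : List ℕ) (ht2 : ∀ x ∈ t, x ≤ 2) (htk0 : k 0 ≤ t.length)
    (m : ℕ) (hm : 1 ≤ m) (hm1 : k (m - 1) ≤ t.length) (hm2 : t.length < k m) :
    ∀ n, m ≤ n → ∀ s : List ℕ, (∀ x ∈ s, x ≤ 2) → s.length = k n - 1 → t <+: s →
      ∀ i ≤ 1, (i, s) ∉ gapFamilyT k m t →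
        ∃ u : List ℕ, (∀ x ∈ u, x ≤ 2) ∧ t <+: u ∧ CoversGap k i s u := by
  intro n hmn s hs2 hslen hts i hi hnotin
  obtain ⟨i0, w, u, m', hm'1, hm'n, hu2, htu, hmem, hassoc⟩ :=
    claim2_core k hk.1 t htk0 m hm hm1 hm2 n hmn s hs2 hslen hts i hi hnotin
  refine ⟨u, hu2, htu, m', w, hm'1, ?_⟩
  rcases hassoc with ⟨hi00, hassoc⟩ | ⟨hi00, hassoc⟩
  · rw [hi00] at hmem
    exact Or.inl ⟨hassoc, gapFamily_mem_all k 0 w m' n hm'n hmem⟩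
  · rw [hi00] at hmem
    exact Or.inr ⟨hassoc, gapFamily_mem_all k 1 w m' n hm'n hmem⟩
end CCS
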